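/- Let (x_i)_{i∈ℤ} be an arbitrary sequence of nonzero elements (in a field) satisfying x_{i+1} x_{i-1} = x_i^2 - 1. Fix k ≥ 1, ℓ ≥ 0, n ∈ ℤ_{≥0}^k, and define, for m ∈ ℤ_{≥0}^k, q_i(m) = ℓ + ∑_{j=i+1}^k (j-i)(2m_j - n_j). Then (as an identity of formal sums, assuming absolute convergence, e.g., x_i real with x_i > 1 suitably) the generating function Z^{(k)}_{ℓ,n}(x_0,x_1) = ∑_{m∈ℤ_{≥0}^k} x_1^{-q_0(m)} x_0^{q_1(m)} ∏_{i=1}^k C(m_i + q_i(m), m_i) satisfies the factorization Z^{(k)}_{ℓ,n}(x_0,x_1) = (x_1 x_k^{ℓ+1})/(x_0 x_{k+1}^{ℓ+1}) · ∏_{i=1}^k x_i^{n_i}. -/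

import Mathlib

open Finset

/-- Generalized binomial coefficient `C(m+q, m) = (q+1)(q+2)⋯(q+m)/m!`, defined for any
integer `q` (possibly negative) and `m ∈ ℕ`. -/
noncomputable def genBinom (q : ℤ) (m : ℕ) : ℝ :=
  (∏ j ∈ Finset.range m, ((q : ℝ) + (j : ℝ) + 1)) / (m.factorial : ℝ)

/-- `q_i(m) = ℓ + ∑_{j=i+1}^k (j-i)(2 m_j - n_j)`, where the `j`-th variable (j = 1,…,k)
is indexed by `Fin k` via `j = (j' : Fin k) + 1`. -/
def qvac (k ℓ : ℕ) (n : ℕ → ℕ) (m : Fin k → ℕ) (i : ℕ) : ℤ :=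
  (ℓ : ℤ) + ∑ j : Fin k,
    (if i ≤ (j : ℕ) then (((j : ℕ) : ℤ) + 1 - (i : ℤ)) * (2 * (m j : ℤ) - (n ((j : ℕ) + 1) : ℤ))
     else 0)

/-- The summand of the sl₂ generating function `Z^{(k)}_{ℓ,n}(x₀,x₁)`. -/
noncomputable def Zsummand (x0 x1 : ℝ) (k ℓ : ℕ) (n : ℕ → ℕ) (m : Fin k → ℕ) : ℝ :=
  x1 ^ (-(qvac k ℓ n m 0)) * x0 ^ (qvac k ℓ n m 1) *
    ∏ j : Fin k, genBinom (qvac k ℓ n m ((j : ℕ) + 1)) (m j)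

/-- The sl₂ generating function `Z^{(k)}_{ℓ,n}(x₀,x₁)
  = ∑_{m ∈ ℤ_{≥0}^k} x₁^{-q₀(m)} x₀^{q₁(m)} ∏_{i=1}^k C(m_i + q_i(m), m_i)`. -/
noncomputable def Zfun (x0 x1 : ℝ) (k ℓ : ℕ) (n : ℕ → ℕ) : ℝ :=
  ∑' m : Fin k → ℕ, Zsummand x0 x1 k ℓ n m


lemma ascFactorial_prod (p m : ℕ) : (p+1).ascFactorial m = ∏ j ∈ Finset.range m, (p + j + 1) := by
  induction m with
  | zero => simp
  | succ m ih => rw [Nat.ascFactorial_succ, Finset.prod_range_succ, ih]; ring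

lemma genBinom_nat (p m : ℕ) : genBinom (p : ℤ) m = ((m + p).choose m : ℝ) := by
  unfold genBinom
  have h1 : ∏ j ∈ Finset.range m, (((p : ℤ) : ℝ) + (j : ℝ) + 1)
      = (((p+1).ascFactorial m : ℕ) : ℝ) := by
    rw [ascFactorial_prod]; push_cast; rfl
  rw [h1, Nat.ascFactorial_eq_factorial_mul_choose]
  have h2 : (m + p).choose m = (p + m).choose m := by rw [Nat.add_comm]
  rw [h2]
  push_cast
  rw [mul_comm, mul_div_assoc, div_self (by positivity), mul_one]

lemma genBinom_neg (p m : ℕ) : genBinom (-(p : ℤ) - 1) m = (-1 : ℝ)^m * (p.choose m : ℝ) := by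
  unfold genBinom
  by_cases h : m ≤ p
  · have h1 : ∏ j ∈ Finset.range m, ((((-(p:ℤ) - 1 : ℤ)) : ℝ) + (j : ℝ) + 1)
        = (-1:ℝ)^m * ((p.descFactorial m : ℕ) : ℝ) := by
      rw [Nat.descFactorial_eq_prod_range]
      push_cast
      have h2 : ∏ x ∈ Finset.range m, ((-(p:ℝ) - 1 + (x:ℝ) + 1))
          = ∏ x ∈ Finset.range m, ((-1 : ℝ) * ((p - x : ℕ) : ℝ)) :=
        Finset.prod_congr rfl fun x hx => by
          rw [Nat.cast_sub (le_trans (Nat.le_of_lt (Finset.mem_range.mp hx)) h)]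
          ring
      rw [h2, Finset.prod_mul_distrib, Finset.prod_const, Finset.card_range]
    rw [h1, Nat.descFactorial_eq_factorial_mul_choose]
    push_cast
    rw [mul_div_assoc, mul_comm ((m.factorial : ℝ)) _, mul_div_assoc,
      div_self (by positivity), mul_one]
  · push_neg at h
    rw [Nat.choose_eq_zero_of_lt h, Finset.prod_eq_zero (Finset.mem_range.mpr h)
      (by push_cast; ring)]
    simp

lemma genBinom_one_le (p m : ℕ) : (1:ℝ) ≤ genBinom (p : ℤ) m := by
  rw [genBinom_nat]
  exact_mod_cast Nat.one_le_iff_ne_zero.mpr (Nat.choose_pos (Nat.le_add_right m p)).ne'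

lemma hasSum_genBinom {z : ℝ} (hz0 : 0 < z) (hz1 : z ≠ 1) (q : ℤ)
    (hs : Summable (fun m : ℕ => genBinom q m * z ^ m)) :
    HasSum (fun m : ℕ => genBinom q m * z ^ m) ((1 - z) ^ (-(q+1))) := by
  rcases le_or_gt 0 q with hq | hq
  · obtain ⟨p, rfl⟩ := Int.eq_ofNat_of_zero_le hq
    have hzlt : z < 1 := by
      by_contra hge
      push_neg at hge
      have h0 := hs.tendsto_atTop_zero
      have : ∀ m : ℕ, (1:ℝ) ≤ genBinom (p:ℤ) m * z ^ m := fun m =>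
        one_le_mul_of_one_le_of_one_le (genBinom_one_le p m) (one_le_pow₀ hge)
      have := ge_of_tendsto h0 (Filter.Eventually.of_forall this)
      linarith
    have habs : ‖z‖ < 1 := by rw [Real.norm_eq_abs, abs_of_pos hz0]; exact hzlt
    have h := hasSum_choose_mul_geometric_of_norm_lt_one (𝕜 := ℝ) p habs
    have heq : ∀ m : ℕ, ((m + p).choose p : ℝ) * z ^ m = genBinom (p:ℤ) m * z ^ m := by
      intro m
      rw [genBinom_nat]
      congr 2
      rw [← Nat.choose_symm (Nat.le_add_left p m), Nat.add_sub_cancel]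
    have h2 : HasSum (fun m : ℕ => genBinom (p:ℤ) m * z ^ m) (1 / (1 - z) ^ (p + 1)) := by
      simpa only [heq] using h
    have h3 : (1 - z : ℝ) ^ (-((p:ℤ) + 1)) = 1 / (1 - z) ^ (p + 1) := by
      rw [zpow_neg, one_div, ← zpow_natCast (1-z) (p+1)]
      norm_num
    rwa [h3]
  · obtain ⟨p, hp⟩ : ∃ p : ℕ, q = -(p:ℤ) - 1 := ⟨(-q - 1).toNat, by omega⟩
    subst hp
    have hsupp : ∀ m ∉ Finset.range (p + 1), genBinom (-(p:ℤ) - 1) m * z ^ m = 0 := by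
      intro m hm
      rw [genBinom_neg, Nat.choose_eq_zero_of_lt (by simpa using hm)]
      simp
    have h : HasSum (fun m : ℕ => genBinom (-(p:ℤ) - 1) m * z ^ m) _ := hasSum_sum_of_ne_finset_zero hsupp
    have hval : ∑ m ∈ Finset.range (p + 1), genBinom (-(p:ℤ) - 1) m * z ^ m
        = (1 - z) ^ (-(-(p:ℤ) - 1 + 1)) := by
      have : (-(-(p:ℤ) - 1 + 1)) = ((p : ℕ) : ℤ) := by push_cast; ring
      rw [this, zpow_natCast]
      have := add_pow (-z) 1 p
      simp only [one_pow, mul_one] at this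
      rw [show (1 - z : ℝ) = -z + 1 by ring, this]
      refine Finset.sum_congr rfl fun m hm => ?_
      rw [genBinom_neg, neg_pow]
      ring
    rwa [hval] at h


lemma qvac_zero_eq (k ℓ : ℕ) (n : ℕ → ℕ) (m : Fin k → ℕ) :
    qvac k ℓ n m 0 = ℓ + ∑ j : Fin k, (((j:ℕ):ℤ) + 1) * (2 * (m j : ℤ) - (n ((j:ℕ)+1) : ℤ)) := by
  unfold qvac
  congr 1

lemma qvac_one_eq (k ℓ : ℕ) (n : ℕ → ℕ) (m : Fin k → ℕ) :
    qvac k ℓ n m 1 = ℓ + ∑ j : Fin k, ((j:ℕ):ℤ) * (2 * (m j : ℤ) - (n ((j:ℕ)+1) : ℤ)) := by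
  unfold qvac
  congr 1
  refine Finset.sum_congr rfl fun j _ => ?_
  by_cases h : 1 ≤ (j:ℕ)
  · rw [if_pos h]; push_cast; ring
  · have h0 : (j:ℕ) = 0 := by omega
    rw [if_neg h, h0]
    simp

lemma qvac_cons_succ (k ℓ : ℕ) (n : ℕ → ℕ) (m1 : ℕ) (b : Fin k → ℕ) (i : ℕ) :
    qvac (k+1) ℓ n (Fin.cons m1 b) (i+1) = qvac k ℓ (fun j => n (j+1)) b i := by
  unfold qvac
  rw [Fin.sum_univ_succ]
  simp only [Fin.cons_zero, Fin.cons_succ, Fin.val_zero, Fin.val_succ]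
  rw [if_neg (by omega), zero_add]
  congr 1
  refine Finset.sum_congr rfl fun j _ => ?_
  by_cases h : i ≤ (j:ℕ)
  · rw [if_pos (by omega), if_pos h]
    push_cast
    ring_nf
  · rw [if_neg (by omega), if_neg h]

lemma qvac_cons_zero (k ℓ : ℕ) (n : ℕ → ℕ) (m1 : ℕ) (b : Fin k → ℕ) :
    qvac (k+1) ℓ n (Fin.cons m1 b) 0
      = 2 * qvac k ℓ (fun j => n (j+1)) b 0 - qvac k ℓ (fun j => n (j+1)) b 1
        + 2 * m1 - n 1 := by
  rw [qvac_zero_eq, qvac_zero_eq, qvac_one_eq, Fin.sum_univ_succ]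
  simp only [Fin.cons_zero, Fin.cons_succ, Fin.val_zero, Fin.val_succ]
  have hsum : ∑ j : Fin k, ((((j:ℕ)+1 : ℕ):ℤ) + 1) * (2 * (b j : ℤ) - (n (((j:ℕ)+1)+1) : ℤ))
      = ∑ j : Fin k, (2 * ((((j:ℕ):ℤ)) + 1) * (2 * (b j : ℤ) - (n ((j:ℕ)+1+1) : ℤ))
          - (((j:ℕ):ℤ)) * (2 * (b j : ℤ) - (n ((j:ℕ)+1+1) : ℤ))) := by
    refine Finset.sum_congr rfl fun j _ => ?_
    push_cast
    ring
  rw [hsum, Finset.sum_sub_distrib,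
    show (∑ j : Fin k, 2 * (((j:ℕ):ℤ) + 1) * (2 * (b j : ℤ) - (n ((j:ℕ)+1+1) : ℤ)))
      = 2 * ∑ j : Fin k, ((((j:ℕ):ℤ)) + 1) * (2 * (b j : ℤ) - (n ((j:ℕ)+1+1) : ℤ)) by
        rw [Finset.mul_sum]; exact Finset.sum_congr rfl fun j _ => by ring]
  push_cast
  ring



lemma Zsummand_cons_eq (x0 x1 : ℝ) (h1 : x1 ≠ 0) (k ℓ : ℕ) (n : ℕ → ℕ)
    (b : Fin k → ℕ) (m1 : ℕ) :
    Zsummand x0 x1 (k+1) ℓ n (Fin.cons m1 b)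
      = (x1 ^ ((n 1 : ℤ) + qvac k ℓ (fun j => n (j+1)) b 1 - 2 * qvac k ℓ (fun j => n (j+1)) b 0)
          * x0 ^ (qvac k ℓ (fun j => n (j+1)) b 0)
          * ∏ j : Fin k, genBinom (qvac k ℓ (fun j => n (j+1)) b ((j : ℕ) + 1)) (b j))
        * (genBinom (qvac k ℓ (fun j => n (j+1)) b 0) m1 * (x1⁻¹ ^ 2) ^ m1) := by
  set n' : ℕ → ℕ := fun j => n (j+1) with hn'
  set Q0 := qvac k ℓ n' b 0
  set Q1 := qvac k ℓ n' b 1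
  unfold Zsummand
  have hq1 : qvac (k+1) ℓ n (Fin.cons m1 b) 1 = Q0 := qvac_cons_succ k ℓ n m1 b 0
  have hq0 : qvac (k+1) ℓ n (Fin.cons m1 b) 0 = 2*Q0 - Q1 + 2*(m1:ℤ) - n 1 :=
    qvac_cons_zero k ℓ n m1 b
  have hprod : (∏ j : Fin (k+1), genBinom (qvac (k+1) ℓ n (Fin.cons m1 b) ((j : ℕ) + 1))
        ((Fin.cons m1 b : Fin (k+1) → ℕ) j))
      = genBinom Q0 m1 * ∏ j : Fin k, genBinom (qvac k ℓ n' b ((j : ℕ) + 1)) (b j) := by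
    rw [Fin.prod_univ_succ]
    congr 1
    · simp only [Fin.cons_zero, Fin.val_zero]
      exact congrArg (fun q => genBinom q m1) (qvac_cons_succ k ℓ n m1 b 0)
    · refine Finset.prod_congr rfl fun j _ => ?_
      simp only [Fin.cons_succ, Fin.val_succ]
      exact congrArg (fun q => genBinom q (b j)) (qvac_cons_succ k ℓ n m1 b ((j:ℕ)+1))
  rw [hq1, hq0, hprod]
  have hx1pow : x1 ^ (-(2*Q0 - Q1 + 2*(m1:ℤ) - n 1))
      = x1 ^ ((n 1 : ℤ) + Q1 - 2*Q0) * (x1⁻¹ ^ 2) ^ m1 := by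
    have hneg2 : x1 ^ (-2 : ℤ) = x1⁻¹ ^ 2 := by
      rw [zpow_neg, ← inv_zpow, show (2:ℤ) = ((2:ℕ):ℤ) from rfl, zpow_natCast]
    rw [show -(2*Q0 - Q1 + 2*(m1:ℤ) - n 1) = ((n 1 : ℤ) + Q1 - 2*Q0) + (-2) * (m1:ℤ) by ring,
      zpow_add₀ h1, zpow_mul, hneg2, zpow_natCast]
  rw [hx1pow]
  ring

lemma key_fiber (x0 x1 x2 : ℝ) (h0 : x0 ≠ 0) (h1 : x1 ≠ 0) (h2 : x2 ≠ 0)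
    (hQ : x2 * x0 = x1 ^ 2 - 1) (k ℓ : ℕ) (n : ℕ → ℕ) (b : Fin k → ℕ)
    (hsb : Summable fun m1 : ℕ => Zsummand x0 x1 (k+1) ℓ n (Fin.cons m1 b)) :
    HasSum (fun m1 : ℕ => Zsummand x0 x1 (k+1) ℓ n (Fin.cons m1 b))
      (x1 ^ ((n 1 : ℤ)) * x1 ^ 2 / (x0 * x2) * Zsummand x1 x2 k ℓ (fun j => n (j+1)) b) := by
  set n' : ℕ → ℕ := fun j => n (j+1) with hn'
  set Q0 := qvac k ℓ n' b 0 with hQ0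
  set Q1 := qvac k ℓ n' b 1 with hQ1
  set P := ∏ j : Fin k, genBinom (qvac k ℓ n' b ((j : ℕ) + 1)) (b j) with hP
  set A := x1 ^ ((n 1 : ℤ) + Q1 - 2*Q0) * x0 ^ Q0 * P with hA
  have hrepr : ∀ m1 : ℕ, Zsummand x0 x1 (k+1) ℓ n (Fin.cons m1 b)
      = A * (genBinom Q0 m1 * (x1⁻¹ ^ 2) ^ m1) := fun m1 =>
    Zsummand_cons_eq x0 x1 h1 k ℓ n b m1
  have hZ' : Zsummand x1 x2 k ℓ n' b = x2 ^ (-Q0) * x1 ^ Q1 * P := rfl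
  by_cases hPz : P = 0
  · have : ∀ m1 : ℕ, Zsummand x0 x1 (k+1) ℓ n (Fin.cons m1 b) = 0 := by
      intro m1; rw [hrepr m1, hA, hPz]; ring
    have hz : (fun m1 : ℕ => Zsummand x0 x1 (k+1) ℓ n (Fin.cons m1 b)) = fun _ => (0:ℝ) :=
      funext this
    rw [hz, hZ', hPz]
    simpa using hasSum_zero
  · -- A ≠ 0
    have hApow : x1 ^ ((n 1 : ℤ) + Q1 - 2*Q0) * x0 ^ Q0 ≠ 0 :=
      mul_ne_zero (zpow_ne_zero _ h1) (zpow_ne_zero _ h0)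
    have hAne : A ≠ 0 := mul_ne_zero hApow hPz
    have hsummg : Summable (fun m1 : ℕ => genBinom Q0 m1 * (x1⁻¹ ^ 2) ^ m1) := by
      have := hsb.congr hrepr  -- Summable fun m1 => A * (...)
      exact (summable_mul_left_iff hAne).mp this
    have hz0 : (0:ℝ) < x1⁻¹ ^ 2 := by positivity
    have hg := hasSum_genBinom hz0 (by
        intro h
        have : x2 * x0 = 0 := by
          rw [hQ]
          have : x1 ^ 2 = 1 := by
            have h' : (x1⁻¹)^2 = 1 := h
            field_simp at h'
            linarith [h']
          rw [this]; ring
        exact (mul_ne_zero h2 h0) this) Q0 hsummg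
    have htot : HasSum (fun m1 : ℕ => Zsummand x0 x1 (k+1) ℓ n (Fin.cons m1 b))
        (A * ((1 - x1⁻¹ ^ 2) ^ (-(Q0+1)))) := by
      simp only [hrepr]
      exact hg.mul_left A
    have hval : A * ((1 - x1⁻¹ ^ 2) ^ (-(Q0+1)))
        = x1 ^ ((n 1 : ℤ)) * x1 ^ 2 / (x0 * x2) * Zsummand x1 x2 k ℓ n' b := by
      rw [hZ']
      have h1mz : (1 - x1⁻¹ ^ 2 : ℝ) = (x2 * x0) * x1⁻¹ ^ 2 := by
        field_simp
        linarith [hQ]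
      have hx1inv2 : (x1⁻¹ ^ 2 : ℝ) = x1 ^ (-2 : ℤ) := by
        rw [zpow_neg, ← inv_zpow, show (2:ℤ) = ((2:ℕ):ℤ) from rfl, zpow_natCast]
      have hinv : (x1⁻¹ ^ 2 : ℝ) ^ (-(Q0+1)) = x1 ^ (2*(Q0+1)) := by
        rw [hx1inv2, ← zpow_mul]
        congr 1
        ring
      rw [h1mz, mul_zpow, mul_zpow, hinv, hA]
      have lhs_eq : x1 ^ ((n 1 : ℤ) + Q1 - 2*Q0) * x0 ^ Q0 * P *
            (x2 ^ (-(Q0+1)) * x0 ^ (-(Q0+1)) * x1 ^ (2*(Q0+1)))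
          = x1 ^ ((n 1 : ℤ) + Q1 + 2) * x0 ^ (-1 : ℤ) * x2 ^ (-1 - Q0) * P := by
        calc x1 ^ ((n 1 : ℤ) + Q1 - 2*Q0) * x0 ^ Q0 * P *
              (x2 ^ (-(Q0+1)) * x0 ^ (-(Q0+1)) * x1 ^ (2*(Q0+1)))
            = x1 ^ ((n 1 : ℤ) + Q1 - 2*Q0) * x1 ^ (2*(Q0+1)) *
              (x0 ^ Q0 * x0 ^ (-(Q0+1))) * x2 ^ (-(Q0+1)) * P := by ring
          _ = x1 ^ (((n 1 : ℤ) + Q1 - 2*Q0) + 2*(Q0+1)) * x0 ^ (Q0 + (-(Q0+1)))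
              * x2 ^ (-(Q0+1)) * P := by
              rw [← zpow_add₀ h1, ← zpow_add₀ h0]
          _ = x1 ^ ((n 1 : ℤ) + Q1 + 2) * x0 ^ (-1 : ℤ) * x2 ^ (-1 - Q0) * P := by
              rw [show ((n 1 : ℤ) + Q1 - 2*Q0) + 2*(Q0+1) = (n 1 : ℤ) + Q1 + 2 by ring,
                show Q0 + (-(Q0+1)) = (-1 : ℤ) by ring, show -(Q0+1) = -1 - Q0 by ring]
      have rhs_eq : x1 ^ ((n 1 : ℤ)) * x1 ^ 2 / (x0 * x2) * (x2 ^ (-Q0) * x1 ^ Q1 * P)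
          = x1 ^ ((n 1 : ℤ) + Q1 + 2) * x0 ^ (-1 : ℤ) * x2 ^ (-1 - Q0) * P := by
        rw [div_eq_mul_inv, mul_inv, show (x0⁻¹ : ℝ) = x0 ^ (-1 : ℤ) by rw [zpow_neg_one],
          show (x2⁻¹ : ℝ) = x2 ^ (-1 : ℤ) by rw [zpow_neg_one],
          show (x1 ^ 2 : ℝ) = x1 ^ (2 : ℤ) by norm_cast]
        calc x1 ^ ((n 1 : ℤ)) * x1 ^ (2:ℤ) * (x0 ^ (-1:ℤ) * x2 ^ (-1:ℤ)) *
              (x2 ^ (-Q0) * x1 ^ Q1 * P)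
            = x1 ^ ((n 1 : ℤ)) * x1 ^ (2:ℤ) * x1 ^ Q1 * (x2 ^ (-1:ℤ) * x2 ^ (-Q0))
              * x0 ^ (-1:ℤ) * P := by ring
          _ = x1 ^ (((n 1 : ℤ) + 2) + Q1) * x2 ^ ((-1) + (-Q0)) * x0 ^ (-1:ℤ) * P := by
              rw [← zpow_add₀ h1, ← zpow_add₀ h1, ← zpow_add₀ h2]
          _ = x1 ^ ((n 1 : ℤ) + Q1 + 2) * x0 ^ (-1 : ℤ) * x2 ^ (-1 - Q0) * P := by
              rw [show ((n 1 : ℤ) + 2) + Q1 = (n 1 : ℤ) + Q1 + 2 by ring,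
                show (-1) + (-Q0) = -1 - Q0 by ring]
              ring
      rw [lhs_eq, rhs_eq]
    rw [hval] at htot
    exact htot

lemma Icc_succ_prod (k : ℕ) (g : ℕ → ℝ) :
    ∏ i ∈ Finset.Icc 1 (k+1), g i = g 1 * ∏ i ∈ Finset.Icc 1 k, g (i+1) := by
  have himg : (Finset.Icc 1 k).image (· + 1) = Finset.Icc 2 (k+1) := by
    ext a
    simp only [Finset.mem_image, Finset.mem_Icc]
    constructor
    · rintro ⟨b, hb, rfl⟩; omega
    · intro ha; exact ⟨a - 1, by omega, by omega⟩
  have hsplit : Finset.Icc 1 (k+1) = insert 1 (Finset.Icc 2 (k+1)) := by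
    ext a
    simp only [Finset.mem_insert, Finset.mem_Icc]
    omega
  rw [hsplit, Finset.prod_insert (by simp [Finset.mem_Icc]), ← himg,
    Finset.prod_image (fun a _ b _ h => by omega)]

lemma Zfun_aux : ∀ (k : ℕ) (x : ℤ → ℝ), (∀ i, x i ≠ 0) →
    (∀ i : ℤ, x (i + 1) * x (i - 1) = x i ^ 2 - 1) →
    ∀ (ℓ : ℕ) (n : ℕ → ℕ), Summable (Zsummand (x 0) (x 1) k ℓ n) →
    Zfun (x 0) (x 1) k ℓ n
      = (x 1 * x k ^ (ℓ + 1)) / (x 0 * x (k + 1) ^ (ℓ + 1)) *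
        ∏ i ∈ Finset.Icc 1 k, x (i : ℤ) ^ n i := by
  intro k
  induction k with
  | zero =>
    intro x hne hQ ℓ n _
    have hq : ∀ (m : Fin 0 → ℕ) i, qvac 0 ℓ n m i = (ℓ : ℤ) := by
      intro m i; unfold qvac; simp
    have hz : ∀ m : Fin 0 → ℕ, Zsummand (x 0) (x 1) 0 ℓ n m
        = x 1 ^ (-(ℓ:ℤ)) * x 0 ^ (ℓ:ℤ) := by
      intro m
      unfold Zsummand
      rw [hq, hq]
      simp
    unfold Zfun
    rw [tsum_eq_single (fun i => 0) (fun b' hb' => absurd (Subsingleton.elim b' _) hb'), hz]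
    have h0 : ((0:ℕ):ℤ) = 0 := by norm_num
    rw [show Finset.Icc 1 0 = (∅ : Finset ℕ) by simp, Finset.prod_empty, mul_one, h0]
    rw [zpow_neg, zpow_natCast, zpow_natCast]
    field_simp [hne 0, hne 1]
    ring
  | succ k ih =>
    intro x hne hQ ℓ n hsum
    set x0 := x 0
    set x1 := x 1
    set x2 := x 2
    set n' : ℕ → ℕ := fun j => n (j+1) with hn'
    have hQ1 : x2 * x0 = x1 ^ 2 - 1 := by
      have := hQ 1
      norm_num at this
      exact this
    -- the equivalence
    set e : (Fin k → ℕ) × ℕ ≃ (Fin (k+1) → ℕ) :=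
      (Equiv.prodComm _ _).trans (Fin.consEquiv (fun _ => ℕ)) with he
    have heval : ∀ p : (Fin k → ℕ) × ℕ, e p = Fin.cons p.2 p.1 := fun p => rfl
    have hF : HasSum (fun p : (Fin k → ℕ) × ℕ => Zsummand x0 x1 (k+1) ℓ n (Fin.cons p.2 p.1))
        (Zfun x0 x1 (k+1) ℓ n) := by
      have := (e.hasSum_iff (f := Zsummand x0 x1 (k+1) ℓ n)
        (a := Zfun x0 x1 (k+1) ℓ n)).mpr hsum.hasSum
      exact this
    have hFsm : Summable (fun p : (Fin k → ℕ) × ℕ => Zsummand x0 x1 (k+1) ℓ n (Fin.cons p.2 p.1)) :=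
      hF.summable
    set C : ℝ := x1 ^ ((n 1 : ℤ)) * x1 ^ 2 / (x0 * x2) with hC
    have hfib : ∀ b : Fin k → ℕ,
        HasSum (fun m1 : ℕ => Zsummand x0 x1 (k+1) ℓ n (Fin.cons m1 b))
          (C * Zsummand x1 x2 k ℓ n' b) := by
      intro b
      exact key_fiber x0 x1 x2 (hne 0) (hne 1) (hne 2) hQ1 k ℓ n b (hFsm.prod_factor b)
    have hsum2 : HasSum (fun b : Fin k → ℕ => C * Zsummand x1 x2 k ℓ n' b)
        (Zfun x0 x1 (k+1) ℓ n) := hF.prod_fiberwise hfib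
    have hCne : C ≠ 0 := by
      rw [hC]
      apply div_ne_zero (mul_ne_zero (zpow_ne_zero _ (hne 1)) (pow_ne_zero _ (hne 1)))
        (mul_ne_zero (hne 0) (hne 2))
    have hsm' : Summable (Zsummand x1 x2 k ℓ n') :=
      (summable_mul_left_iff hCne).mp hsum2.summable
    have hzval : Zfun x0 x1 (k+1) ℓ n = C * Zfun x1 x2 k ℓ n' := by
      rw [← hsum2.tsum_eq, tsum_mul_left, Zfun]
    -- apply IH to shifted sequence
    set xs : ℤ → ℝ := fun i => x (i + 1) with hxs
    have hne' : ∀ i, xs i ≠ 0 := fun i => hne (i+1)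
    have hQ' : ∀ i : ℤ, xs (i + 1) * xs (i - 1) = xs i ^ 2 - 1 := by
      intro i
      have := hQ (i + 1)
      simp only [hxs]
      rw [show i + 1 + 1 = (i+1) + 1 by ring, show i - 1 + 1 = (i+1) - 1 by ring]
      exact this
    have hxs0 : xs 0 = x1 := by rw [hxs]; norm_num; rfl
    have hxs1 : xs 1 = x2 := by rw [hxs]; norm_num; rfl
    have ihk := ih xs hne' hQ' ℓ n' (by rwa [hxs0, hxs1])
    rw [hxs0, hxs1] at ihk
    have hxk : xs (k : ℤ) = x ((k : ℤ) + 1) := rfl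
    have hxk1 : xs ((k : ℤ) + 1) = x ((k : ℤ) + 2) := by rw [hxs]; ring_nf
    rw [hxk, hxk1] at ihk
    have hprodt : ∏ i ∈ Finset.Icc 1 (k+1), x (i : ℤ) ^ n i
        = x 1 ^ n 1 * ∏ i ∈ Finset.Icc 1 k, x ((i:ℤ) + 1) ^ n (i + 1) := by
      rw [Icc_succ_prod k (fun i => x (i : ℤ) ^ n i)]
      congr 1
    rw [hzval, ihk, hprodt, hC, zpow_natCast]
    push_cast
    have ha : x ((k:ℤ)+1) ≠ 0 := hne _
    have hb : x ((k:ℤ)+2) ≠ 0 := hne _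
    have hx0' : x0 ≠ 0 := hne 0
    have hx1' : x1 ≠ 0 := hne 1
    have hx2' : x2 ≠ 0 := hne 2
    simp only [hxs, hn']
    rw [show ((k:ℤ)+1+1) = (k:ℤ)+2 by ring]
    field_simp
    ring

/-- Factorization of the sl₂ generating function: if `(x_i)_{i∈ℤ}` is a sequence of nonzero
reals satisfying the A₁ Q-system `x_{i+1} x_{i-1} = x_i² - 1`, then
`Z^{(k)}_{ℓ,n}(x₀,x₁) = (x₁ x_k^{ℓ+1})/(x₀ x_{k+1}^{ℓ+1}) ∏_{i=1}^k x_i^{n_i}`. -/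
theorem Zfun_factorization (x : ℤ → ℝ) (hne : ∀ i, x i ≠ 0)
    (hQ : ∀ i : ℤ, x (i + 1) * x (i - 1) = x i ^ 2 - 1)
    (k : ℕ) (hk : 1 ≤ k) (ℓ : ℕ) (n : ℕ → ℕ)
    (hsum : Summable (Zsummand (x 0) (x 1) k ℓ n)) :
    Zfun (x 0) (x 1) k ℓ n
      = (x 1 * x k ^ (ℓ + 1)) / (x 0 * x (k + 1) ^ (ℓ + 1)) *
        ∏ i ∈ Finset.Icc 1 k, x (i : ℤ) ^ n i := by
  exact Zfun_aux k x hne hQ ℓ n hsum
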